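/- Let n and m be even, with n ≥ 4, m ≥ 2. For G = ⟨X, Y, Z | X^n = Z^α, Y² = 1, YX = X^{n-1}YZ^γ, YZ = ZY, XZ = ZX, Z^m = 1⟩ with (n/2)(α+γ) ≡ α + m/2 (mod m), the subgroup ⟨X, Z⟩ is abelian of index 2 in G; consequently every irreducible complex representation of G has dimension 1 or 2. -/

import Mathlib

/-- Relations for the central extension of the dihedral group `D_{2n}` by `ℤ/mℤ`
with parameters `(α, β, γ)`: generators `X = 0`, `Y = 1`, `Z = 2`. -/
def grels (n m : ℕ) (α β γ : ℤ) : Set (FreeGroup (Fin 3)) :=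
  { FreeGroup.of (0 : Fin 3) ^ n * (FreeGroup.of (2 : Fin 3) ^ α)⁻¹,
    FreeGroup.of (1 : Fin 3) ^ 2 * (FreeGroup.of (2 : Fin 3) ^ β)⁻¹,
    FreeGroup.of (1 : Fin 3) * FreeGroup.of (0 : Fin 3) *
      (FreeGroup.of (0 : Fin 3) ^ (n - 1) * FreeGroup.of (1 : Fin 3) *
        FreeGroup.of (2 : Fin 3) ^ γ)⁻¹,
    FreeGroup.of (1 : Fin 3) * FreeGroup.of (2 : Fin 3) *
      (FreeGroup.of (2 : Fin 3) * FreeGroup.of (1 : Fin 3))⁻¹,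
    FreeGroup.of (0 : Fin 3) * FreeGroup.of (2 : Fin 3) *
      (FreeGroup.of (2 : Fin 3) * FreeGroup.of (0 : Fin 3))⁻¹,
    FreeGroup.of (2 : Fin 3) ^ m }

/-- The central extension `G(α, β, γ)` of `D_{2n}` by `ℤ/mℤ`. -/
abbrev GG (n m : ℕ) (α β γ : ℤ) : Type := PresentedGroup (grels n m α β γ)

def gX (n m : ℕ) (α β γ : ℤ) : GG n m α β γ := PresentedGroup.of 0
def gY (n m : ℕ) (α β γ : ℤ) : GG n m α β γ := PresentedGroup.of 1
def gZ (n m : ℕ) (α β γ : ℤ) : GG n m α β γ := PresentedGroup.of 2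

open FiniteDimensional

section aux

lemma grel_one {n m : ℕ} {α β γ : ℤ} {r : FreeGroup (Fin 3)} (h : r ∈ grels n m α β γ) :
    PresentedGroup.mk (grels n m α β γ) r = 1 :=
  (QuotientGroup.eq_one_iff r).mpr (Subgroup.subset_normalClosure h)

lemma mk_of {n m : ℕ} {α β γ : ℤ} (x : Fin 3) :
    PresentedGroup.mk (grels n m α β γ) (FreeGroup.of x) = PresentedGroup.of x := rfl

variable (n m : ℕ) (α γ : ℤ)

lemma relY2 : gY n m α 0 γ * gY n m α 0 γ = 1 := by
  have h := grel_one (n := n) (m := m) (α := α) (β := 0) (γ := γ)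
    (Set.mem_insert_of_mem _ (Set.mem_insert _ _))
  simp only [map_mul, map_pow, map_zpow, map_inv, mk_of, zpow_zero, inv_one, mul_one, sq] at h
  exact h

lemma relYX : gY n m α 0 γ * gX n m α 0 γ
    = gX n m α 0 γ ^ (n - 1) * gY n m α 0 γ * gZ n m α 0 γ ^ γ := by
  have h := grel_one (n := n) (m := m) (α := α) (β := 0) (γ := γ)
    (Set.mem_insert_of_mem _ (Set.mem_insert_of_mem _ (Set.mem_insert _ _)))
  simp only [map_mul, map_pow, map_zpow, map_inv, mk_of] at h
  rw [mul_inv_eq_one] at h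
  exact h

lemma relYZ : gY n m α 0 γ * gZ n m α 0 γ = gZ n m α 0 γ * gY n m α 0 γ := by
  have h := grel_one (n := n) (m := m) (α := α) (β := 0) (γ := γ)
    (Set.mem_insert_of_mem _ (Set.mem_insert_of_mem _ (Set.mem_insert_of_mem _
      (Set.mem_insert _ _))))
  simp only [map_mul, map_inv, mk_of] at h
  rw [mul_inv_eq_one] at h
  exact h

lemma relXZ : gX n m α 0 γ * gZ n m α 0 γ = gZ n m α 0 γ * gX n m α 0 γ := by
  have h := grel_one (n := n) (m := m) (α := α) (β := 0) (γ := γ)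
    (Set.mem_insert_of_mem _ (Set.mem_insert_of_mem _ (Set.mem_insert_of_mem _
      (Set.mem_insert_of_mem _ (Set.mem_insert _ _)))))
  simp only [map_mul, map_inv, mk_of] at h
  rw [mul_inv_eq_one] at h
  exact h

lemma relYinv : (gY n m α 0 γ)⁻¹ = gY n m α 0 γ :=
  inv_eq_of_mul_eq_one_right (relY2 n m α γ)

/-- `Y X Y = X^(n-1) Z^γ`. -/
lemma relYXY : gY n m α 0 γ * gX n m α 0 γ * gY n m α 0 γ
    = gX n m α 0 γ ^ (n - 1) * gZ n m α 0 γ ^ γ := by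
  have hcz : gY n m α 0 γ * gZ n m α 0 γ ^ γ = gZ n m α 0 γ ^ γ * gY n m α 0 γ :=
    (Commute.zpow_right (relYZ n m α γ) γ).eq
  calc gY n m α 0 γ * gX n m α 0 γ * gY n m α 0 γ
      = gX n m α 0 γ ^ (n - 1) * gY n m α 0 γ * gZ n m α 0 γ ^ γ * gY n m α 0 γ := by
        rw [relYX]
    _ = gX n m α 0 γ ^ (n - 1) * (gY n m α 0 γ * gZ n m α 0 γ ^ γ) * gY n m α 0 γ := by
        rw [mul_assoc (gX n m α 0 γ ^ (n - 1))]
    _ = gX n m α 0 γ ^ (n - 1) * (gZ n m α 0 γ ^ γ * gY n m α 0 γ) * gY n m α 0 γ := by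
        rw [hcz]
    _ = gX n m α 0 γ ^ (n - 1) * gZ n m α 0 γ ^ γ * (gY n m α 0 γ * gY n m α 0 γ) := by
        group
    _ = gX n m α 0 γ ^ (n - 1) * gZ n m α 0 γ ^ γ := by rw [relY2, mul_one]

/-- conjugation by `Y` preserves `⟨X, Z⟩`. -/
lemma conj_mem {h : GG n m α 0 γ} (hh : h ∈ Subgroup.closure {gX n m α 0 γ, gZ n m α 0 γ}) :
    gY n m α 0 γ * h * gY n m α 0 γ ∈ Subgroup.closure {gX n m α 0 γ, gZ n m α 0 γ} := by
  induction hh using Subgroup.closure_induction with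
  | mem x hx =>
    rcases hx with rfl | rfl
    · rw [relYXY]
      have hXm : gX n m α 0 γ ∈ Subgroup.closure {gX n m α 0 γ, gZ n m α 0 γ} :=
        Subgroup.subset_closure (Set.mem_insert _ _)
      have hZm : gZ n m α 0 γ ∈ Subgroup.closure {gX n m α 0 γ, gZ n m α 0 γ} :=
        Subgroup.subset_closure (Set.mem_insert_of_mem _ rfl)
      exact mul_mem (pow_mem hXm _) (zpow_mem hZm _)
    · have : gY n m α 0 γ * gZ n m α 0 γ * gY n m α 0 γ
          = gZ n m α 0 γ * (gY n m α 0 γ * gY n m α 0 γ) := by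
        rw [relYZ, mul_assoc]
      rw [this, relY2, mul_one]
      exact Subgroup.subset_closure (Set.mem_insert_of_mem _ rfl)
  | one =>
    rw [mul_one, relY2]
    exact one_mem _
  | mul a b ha hb iha ihb =>
    have e : (gY n m α 0 γ * a * (gY n m α 0 γ)⁻¹) * (gY n m α 0 γ * b * gY n m α 0 γ)
        = gY n m α 0 γ * (a * b) * gY n m α 0 γ := by group
    rw [relYinv] at e
    rw [← e]
    exact mul_mem iha ihb
  | inv a ha iha =>
    have e : (gY n m α 0 γ * a * (gY n m α 0 γ)⁻¹)⁻¹
        = gY n m α 0 γ * a⁻¹ * (gY n m α 0 γ)⁻¹ := by group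
    rw [relYinv] at e
    rw [← e]
    exact inv_mem iha

lemma step_inv (A : GG n m α 0 γ)
    (h : A ∈ Subgroup.closure {gX n m α 0 γ, gZ n m α 0 γ} ∨
      A * gY n m α 0 γ ∈ Subgroup.closure {gX n m α 0 γ, gZ n m α 0 γ}) :
    A⁻¹ ∈ Subgroup.closure {gX n m α 0 γ, gZ n m α 0 γ} ∨
      A⁻¹ * gY n m α 0 γ ∈ Subgroup.closure {gX n m α 0 γ, gZ n m α 0 γ} := by
  rcases h with h | h
  · exact Or.inl (inv_mem h)
  · right
    have e : gY n m α 0 γ * (A * gY n m α 0 γ)⁻¹ * (gY n m α 0 γ)⁻¹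
        = A⁻¹ * (gY n m α 0 γ)⁻¹ := by group
    rw [relYinv] at e
    rw [← e]
    exact conj_mem n m α γ (inv_mem h)

lemma step_mul (A B : GG n m α 0 γ)
    (ha : A ∈ Subgroup.closure {gX n m α 0 γ, gZ n m α 0 γ} ∨
      A * gY n m α 0 γ ∈ Subgroup.closure {gX n m α 0 γ, gZ n m α 0 γ})
    (hb : B ∈ Subgroup.closure {gX n m α 0 γ, gZ n m α 0 γ} ∨
      B * gY n m α 0 γ ∈ Subgroup.closure {gX n m α 0 γ, gZ n m α 0 γ}) :
    A * B ∈ Subgroup.closure {gX n m α 0 γ, gZ n m α 0 γ} ∨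
      A * B * gY n m α 0 γ ∈ Subgroup.closure {gX n m α 0 γ, gZ n m α 0 γ} := by
  rcases ha with ha | ha <;> rcases hb with hb | hb
  · exact Or.inl (mul_mem ha hb)
  · right; rw [mul_assoc]; exact mul_mem ha hb
  · right
    have e : (A * gY n m α 0 γ) * ((gY n m α 0 γ)⁻¹ * B * gY n m α 0 γ)
        = A * B * gY n m α 0 γ := by group
    rw [relYinv] at e
    rw [← e]
    exact mul_mem ha (conj_mem n m α γ hb)
  · left
    have e : (A * gY n m α 0 γ) * ((gY n m α 0 γ)⁻¹ * (B * gY n m α 0 γ) * (gY n m α 0 γ)⁻¹)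
        = A * B := by group
    rw [relYinv] at e
    rw [← e]
    exact mul_mem ha (conj_mem n m α γ hb)

lemma of_cases (x : Fin 3) :
    PresentedGroup.of (rels := grels n m α 0 γ) x = gX n m α 0 γ ∨
    PresentedGroup.of (rels := grels n m α 0 γ) x = gY n m α 0 γ ∨
    PresentedGroup.of (rels := grels n m α 0 γ) x = gZ n m α 0 γ := by
  fin_cases x
  · exact Or.inl rfl
  · exact Or.inr (Or.inl rfl)
  · exact Or.inr (Or.inr rfl)

/-- every element is in `⟨X,Z⟩` or its coset by `Y`. -/
lemma cover (g : GG n m α 0 γ) :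
    g ∈ Subgroup.closure {gX n m α 0 γ, gZ n m α 0 γ} ∨
      g * gY n m α 0 γ ∈ Subgroup.closure {gX n m α 0 γ, gZ n m α 0 γ} := by
  induction g using PresentedGroup.induction_on with
  | _ z =>
  induction z using FreeGroup.induction_on with
  | C1 =>
    left
    rw [map_one]
    exact one_mem _
  | of x =>
    have hx : PresentedGroup.mk (grels n m α 0 γ) (FreeGroup.of x)
        = PresentedGroup.of (rels := grels n m α 0 γ) x := rfl
    rw [hx]
    rcases of_cases n m α γ x with h | h | h <;> rw [h]
    · exact Or.inl (Subgroup.subset_closure (Set.mem_insert _ _))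
    · right; rw [relY2]; exact one_mem _
    · exact Or.inl (Subgroup.subset_closure (Set.mem_insert_of_mem _ rfl))
  | inv_of x ih =>
    rw [map_inv]
    exact step_inv n m α γ _ ih
  | mul a b iha ihb =>
    rw [map_mul]
    exact step_mul n m α γ _ _ iha ihb

/-- the homomorphism onto `ℤ/2` killing `X` and `Z`. -/
noncomputable def gphi : GG n m α 0 γ →* Multiplicative (ZMod 2) :=
  PresentedGroup.toGroup (f := ![1, Multiplicative.ofAdd 1, 1]) (by
    rintro r (rfl | rfl | rfl | rfl | rfl | rfl) <;>
      (try simp [map_mul, map_pow, map_zpow, map_inv]) <;> decide)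

lemma gphi_X : gphi n m α γ (gX n m α 0 γ) = 1 := by
  simp [gphi, gX, PresentedGroup.toGroup.of]

lemma gphi_Z : gphi n m α γ (gZ n m α 0 γ) = 1 := by
  simp [gphi, gZ, PresentedGroup.toGroup.of]

lemma gphi_Y : gphi n m α γ (gY n m α 0 γ) = Multiplicative.ofAdd 1 := by
  simp [gphi, gY, PresentedGroup.toGroup.of]

lemma Y_not_mem : gY n m α 0 γ ∉ Subgroup.closure {gX n m α 0 γ, gZ n m α 0 γ} := by
  intro hY
  have hle : Subgroup.closure {gX n m α 0 γ, gZ n m α 0 γ} ≤ (gphi n m α γ).ker := by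
    rw [Subgroup.closure_le]
    rintro x (rfl | rfl)
    · exact gphi_X n m α γ
    · exact gphi_Z n m α γ
  have h1 : gphi n m α γ (gY n m α 0 γ) = 1 := hle hY
  rw [gphi_Y] at h1
  exact absurd h1 (by decide)

lemma abelian : ∀ a ∈ Subgroup.closure {gX n m α 0 γ, gZ n m α 0 γ},
    ∀ b ∈ Subgroup.closure {gX n m α 0 γ, gZ n m α 0 γ}, a * b = b * a := by
  intro a ha b hb
  refine Subgroup.closure_induction₂ (p := fun x y _ _ => Commute x y)
    ?_ ?_ ?_ ?_ ?_ ?_ ?_ ha hb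
  · rintro x y (rfl | rfl) (rfl | rfl)
    · exact Commute.refl _
    · exact relXZ n m α γ
    · exact (relXZ n m α γ).symm
    · exact Commute.refl _
  · exact fun x _ => Commute.one_left x
  · exact fun x _ => Commute.one_right x
  · exact fun x y z _ _ _ h1 h2 => h1.mul_left h2
  · exact fun y z x _ _ _ h1 h2 => h1.mul_right h2
  · exact fun x y _ _ h => h.inv_left
  · exact fun x y _ _ h => h.inv_right

lemma index_two : (Subgroup.closure {gX n m α 0 γ, gZ n m α 0 γ}).index = 2 := by
  rw [Subgroup.index_eq_two_iff]
  refine ⟨gY n m α 0 γ, fun b => ?_⟩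
  by_cases hb : b ∈ Subgroup.closure {gX n m α 0 γ, gZ n m α 0 γ}
  · refine Or.inr ⟨hb, fun hbY => Y_not_mem n m α γ ?_⟩
    have := mul_mem (inv_mem hb) hbY
    rwa [← mul_assoc, inv_mul_cancel, one_mul] at this
  · refine Or.inl ⟨?_, hb⟩
    rcases cover n m α γ b with h | h
    · exact absurd h hb
    · exact h

end aux

section rep

variable (n m : ℕ) (α γ : ℤ)
variable (V : Type) [AddCommGroup V] [Module ℂ V] [FiniteDimensional ℂ V] [Nontrivial V]
variable (ρ : Representation ℂ (GG n m α 0 γ) V)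

lemma rep_dim
    (hirr : ∀ W : Submodule ℂ V, (∀ g : GG n m α 0 γ, ∀ v ∈ W, ρ g v ∈ W) →
      W = ⊥ ∨ W = ⊤) :
    Module.finrank ℂ V = 1 ∨ Module.finrank ℂ V = 2 := by
  -- a common eigenvector for ρ X and ρ Z
  obtain ⟨μ, hμ⟩ := Module.End.exists_eigenvalue (ρ (gZ n m α 0 γ))
  have hXE : ∀ w ∈ Module.End.eigenspace (ρ (gZ n m α 0 γ)) μ,
      ρ (gX n m α 0 γ) w ∈ Module.End.eigenspace (ρ (gZ n m α 0 γ)) μ := by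
    intro w hw
    rw [Module.End.mem_eigenspace_iff] at hw ⊢
    have h1 : ρ (gZ n m α 0 γ) (ρ (gX n m α 0 γ) w)
        = ρ (gX n m α 0 γ) (ρ (gZ n m α 0 γ) w) := by
      rw [← Module.End.mul_apply, ← map_mul, ← relXZ n m α γ, map_mul, Module.End.mul_apply]
    rw [h1, hw, map_smul]
  haveI : Nontrivial (Module.End.eigenspace (ρ (gZ n m α 0 γ)) μ) := by
    rw [Submodule.nontrivial_iff_ne_bot]
    exact hμ
  obtain ⟨ν, hν⟩ := Module.End.exists_eigenvalue ((ρ (gX n m α 0 γ)).restrict hXE)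
  obtain ⟨w, hw⟩ := hν.exists_hasEigenvector
  have hv0 : (w : V) ≠ 0 := fun h => hw.2 (Subtype.coe_injective (by simpa using h))
  have hXv : ρ (gX n m α 0 γ) (w : V) = ν • (w : V) := by
    have h1 := hw.1
    rw [Module.End.mem_eigenspace_iff] at h1
    have h2 := congrArg Subtype.val h1
    simpa [LinearMap.restrict_apply] using h2
  have hZv : ρ (gZ n m α 0 γ) (w : V) = μ • (w : V) := by
    have h1 := w.2
    rw [Module.End.mem_eigenspace_iff] at h1
    exact h1
  -- nonzero scalars
  have hunit : ∀ (g : GG n m α 0 γ) (c : ℂ), ρ g (w : V) = c • (w : V) → c ≠ 0 := by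
    intro g c h hc0
    apply hv0
    have h2 : ρ g⁻¹ (ρ g (w : V)) = (w : V) := by
      rw [← Module.End.mul_apply, ← map_mul, inv_mul_cancel, map_one, Module.End.one_apply]
    rw [h, hc0, zero_smul, map_zero] at h2
    exact h2.symm
  -- every element of the closure acts on w by a scalar
  have hscal : ∀ h ∈ Subgroup.closure {gX n m α 0 γ, gZ n m α 0 γ},
      ∃ c : ℂ, ρ h (w : V) = c • (w : V) := by
    intro h hh
    induction hh using Subgroup.closure_induction with
    | mem x hx =>
      rcases hx with rfl | rfl
      · exact ⟨ν, hXv⟩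
      · exact ⟨μ, hZv⟩
    | one => exact ⟨1, by rw [map_one, Module.End.one_apply, one_smul]⟩
    | mul a b ha hb iha ihb =>
      obtain ⟨ca, hca⟩ := iha
      obtain ⟨cb, hcb⟩ := ihb
      refine ⟨cb * ca, ?_⟩
      rw [map_mul, Module.End.mul_apply, hcb, map_smul, hca, smul_smul]
    | inv a ha iha =>
      obtain ⟨c, hc⟩ := iha
      have hc0 := hunit a c hc
      refine ⟨c⁻¹, ?_⟩
      have h2 : ρ a⁻¹ (ρ a (w : V)) = (w : V) := by
        rw [← Module.End.mul_apply, ← map_mul, inv_mul_cancel, map_one, Module.End.one_apply]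
      rw [hc, map_smul] at h2
      calc ρ a⁻¹ (w : V) = c⁻¹ • (c • ρ a⁻¹ (w : V)) := by
            rw [smul_smul, inv_mul_cancel₀ hc0, one_smul]
        _ = c⁻¹ • (w : V) := by rw [h2]
  -- the invariant subspace
  have hWv : (w : V) ∈ Submodule.span ℂ {(w : V), ρ (gY n m α 0 γ) (w : V)} :=
    Submodule.subset_span (Set.mem_insert _ _)
  have hWYv : ρ (gY n m α 0 γ) (w : V)
      ∈ Submodule.span ℂ {(w : V), ρ (gY n m α 0 γ) (w : V)} :=
    Submodule.subset_span (Set.mem_insert_of_mem _ rfl)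
  have hmap_le : ∀ g : GG n m α 0 γ,
      ρ g (w : V) ∈ Submodule.span ℂ {(w : V), ρ (gY n m α 0 γ) (w : V)} →
      ρ g (ρ (gY n m α 0 γ) (w : V))
        ∈ Submodule.span ℂ {(w : V), ρ (gY n m α 0 γ) (w : V)} →
      Submodule.map (ρ g) (Submodule.span ℂ {(w : V), ρ (gY n m α 0 γ) (w : V)})
        ≤ Submodule.span ℂ {(w : V), ρ (gY n m α 0 γ) (w : V)} := by
    intro g h1 h2
    rw [Submodule.map_span, Submodule.span_le, Set.image_insert_eq, Set.image_singleton]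
    rintro u (rfl | rfl)
    · exact h1
    · exact h2
  have hmapH : ∀ h ∈ Subgroup.closure {gX n m α 0 γ, gZ n m α 0 γ},
      Submodule.map (ρ h) (Submodule.span ℂ {(w : V), ρ (gY n m α 0 γ) (w : V)})
        ≤ Submodule.span ℂ {(w : V), ρ (gY n m α 0 γ) (w : V)} := by
    intro h hh
    obtain ⟨c, hc⟩ := hscal h hh
    refine hmap_le h (by rw [hc]; exact Submodule.smul_mem _ _ hWv) ?_
    have hk : (gY n m α 0 γ)⁻¹ * h * gY n m α 0 γ
        ∈ Subgroup.closure {gX n m α 0 γ, gZ n m α 0 γ} := by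
      have h3 := conj_mem n m α γ (h := h) hh
      nth_rewrite 1 [← relYinv n m α γ] at h3
      exact h3
    obtain ⟨c', hc'⟩ := hscal _ hk
    have e : h * gY n m α 0 γ
        = gY n m α 0 γ * ((gY n m α 0 γ)⁻¹ * h * gY n m α 0 γ) := by group
    rw [← Module.End.mul_apply, ← map_mul, e, map_mul, Module.End.mul_apply, hc', map_smul]
    exact Submodule.smul_mem _ _ hWYv
  have hmapY : Submodule.map (ρ (gY n m α 0 γ))
      (Submodule.span ℂ {(w : V), ρ (gY n m α 0 γ) (w : V)})
        ≤ Submodule.span ℂ {(w : V), ρ (gY n m α 0 γ) (w : V)} := by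
    refine hmap_le _ hWYv ?_
    rw [← Module.End.mul_apply, ← map_mul, relY2, map_one, Module.End.one_apply]
    exact hWv
  have hmap_eq : ∀ g : GG n m α 0 γ,
      Submodule.map (ρ g) (Submodule.span ℂ {(w : V), ρ (gY n m α 0 γ) (w : V)})
        ≤ Submodule.span ℂ {(w : V), ρ (gY n m α 0 γ) (w : V)} →
      Submodule.map (ρ g⁻¹) (Submodule.span ℂ {(w : V), ρ (gY n m α 0 γ) (w : V)})
        ≤ Submodule.span ℂ {(w : V), ρ (gY n m α 0 γ) (w : V)} →
      Submodule.map (ρ g) (Submodule.span ℂ {(w : V), ρ (gY n m α 0 γ) (w : V)})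
        = Submodule.span ℂ {(w : V), ρ (gY n m α 0 γ) (w : V)} := by
    intro g h1 h2
    refine le_antisymm h1 ?_
    have h3 := Submodule.map_mono (f := ρ g) h2
    rwa [← Submodule.map_comp, ← Module.End.mul_eq_comp, ← map_mul, mul_inv_cancel, map_one,
      Module.End.one_eq_id, Submodule.map_id] at h3
  have hS : ∀ g : GG n m α 0 γ,
      Submodule.map (ρ g) (Submodule.span ℂ {(w : V), ρ (gY n m α 0 γ) (w : V)})
        = Submodule.span ℂ {(w : V), ρ (gY n m α 0 γ) (w : V)} := by
    have hXmem : gX n m α 0 γ ∈ Subgroup.closure {gX n m α 0 γ, gZ n m α 0 γ} :=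
      Subgroup.subset_closure (Set.mem_insert _ _)
    have hZmem : gZ n m α 0 γ ∈ Subgroup.closure {gX n m α 0 γ, gZ n m α 0 γ} :=
      Subgroup.subset_closure (Set.mem_insert_of_mem _ rfl)
    intro g
    refine PresentedGroup.generated_by _
      { carrier := {g | Submodule.map (ρ g)
          (Submodule.span ℂ {(w : V), ρ (gY n m α 0 γ) (w : V)})
          = Submodule.span ℂ {(w : V), ρ (gY n m α 0 γ) (w : V)}}
        one_mem' := by
          simp only [Set.mem_setOf_eq, map_one, Module.End.one_eq_id, Submodule.map_id]
        mul_mem' := by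
          intro a b ha hb
          simp only [Set.mem_setOf_eq] at ha hb ⊢
          rw [map_mul, Module.End.mul_eq_comp, Submodule.map_comp, hb, ha]
        inv_mem' := by
          intro a ha
          simp only [Set.mem_setOf_eq] at ha ⊢
          conv_lhs => rw [← ha]
          rw [← Submodule.map_comp, ← Module.End.mul_eq_comp, ← map_mul, inv_mul_cancel, map_one,
            Module.End.one_eq_id, Submodule.map_id] } ?_ g
    intro j
    rcases of_cases n m α γ j with h | h | h <;> rw [h] <;> show Submodule.map _ _ = _
    · exact hmap_eq _ (hmapH _ hXmem) (hmapH _ (inv_mem hXmem))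
    · refine hmap_eq _ hmapY ?_
      rw [relYinv]
      exact hmapY
    · exact hmap_eq _ (hmapH _ hZmem) (hmapH _ (inv_mem hZmem))
  have hWinv : ∀ g : GG n m α 0 γ,
      ∀ u ∈ Submodule.span ℂ {(w : V), ρ (gY n m α 0 γ) (w : V)},
        ρ g u ∈ Submodule.span ℂ {(w : V), ρ (gY n m α 0 γ) (w : V)} := by
    intro g u hu
    rw [← hS g]
    exact Submodule.mem_map_of_mem hu
  rcases hirr _ hWinv with hbot | htop
  · rw [hbot] at hWv
    exact absurd (Submodule.mem_bot ℂ |>.mp hWv) hv0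
  · have hle2 : Module.finrank ℂ V ≤ 2 := by
      classical
      rw [← finrank_top ℂ V, ← htop]
      refine le_trans (finrank_span_le_card _) ?_
      rw [Set.toFinset_insert, Set.toFinset_singleton]
      exact le_trans (Finset.card_insert_le _ _) (by simp)
    have hge1 : 1 ≤ Module.finrank ℂ V := Module.finrank_pos
    omega

end rep

/-- For `n = 2n₂ ≥ 4`, `m = 2m₂ ≥ 2` even with `(n/2)(α+γ) ≡ α + m/2 (mod m)`, the
subgroup `⟨X, Z⟩` of `G(α, 0, γ)` is abelian of index `2`; consequently every
(nonzero, finite-dimensional) irreducible complex representation of `G(α, 0, γ)`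
has dimension `1` or `2`. -/
theorem stmt19 (n₂ m₂ : ℕ) (n m : ℕ) (hn : n = 2 * n₂) (hm : m = 2 * m₂)
    (hn4 : 4 ≤ n) (hm2 : 2 ≤ m) (α γ : ℤ)
    (hreal : (n₂ : ℤ) * (α + γ) ≡ α + (m₂ : ℤ) [ZMOD (m : ℤ)]) :
    (∀ a ∈ Subgroup.closure {gX n m α 0 γ, gZ n m α 0 γ},
      ∀ b ∈ Subgroup.closure {gX n m α 0 γ, gZ n m α 0 γ}, a * b = b * a) ∧
    (Subgroup.closure {gX n m α 0 γ, gZ n m α 0 γ}).index = 2 ∧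
    ∀ (V : Type) (_ : AddCommGroup V) (_ : Module ℂ V) (_ : FiniteDimensional ℂ V)
      (_ : Nontrivial V) (ρ : Representation ℂ (GG n m α 0 γ) V),
      (∀ W : Submodule ℂ V, (∀ g : GG n m α 0 γ, ∀ v ∈ W, ρ g v ∈ W) →
        W = ⊥ ∨ W = ⊤) →
      Module.finrank ℂ V = 1 ∨ Module.finrank ℂ V = 2 := by
  exact ⟨abelian n m α γ, index_two n m α γ,
    fun V _ _ _ _ ρ hirr => rep_dim n m α γ V ρ hirr⟩
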